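/- r_4(7,7) ≥ 3961: there exists a (7, 7; 4)-coloring of Fin 3960, i.e., a function χ : Finset (Fin 3960) → Bool such that every 7-element subset of Fin 3960 contains a 4-element subset e with χ e = false and also contains a 4-element subset e' with χ e' = true (no monochromatic 7-element set). -/

import Mathlib

namespace Stmt18

def table : ℕ := 672706415849525363672061710590748598082054942455713095703964256924642914189508604773708764189696783156378438073888116272514874423732520634561813215153607053875797856686870851853903126694745991235256454802873769668129528683165453542814843478252959701980957822297832097572548364220765808259905889478346629506641527846193828410048071433165537165021332233454117570290442978376406610094766685469452178283697760467006031728469967917528807300880432965913416830357751109408221102630591453549936353310773033027871608247415449252656718507485167056988149665938472328331218576476251106124193342356105862802107840230884163164975143741284185292511155265376324189423119516091120670999614162957559489042301743575987794035519369311359101892933608548770950269778021066315328438883845219777247547175011595833025519684783609201036147228064558713482161640863490001621380909381785837548584295023877452057259953520047048905645770305918112562510021642824851340409610945571121589303631873475047658714497620854651762100290979968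

def psi (a b c : ℕ) : Bool := table.testBit (2^a ||| 2^b ||| 2^c)

def dlt (x y : ℕ) : ℕ := (x ^^^ y).size - 1


lemma psi_rev (a b c : ℕ) : psi a b c = psi c b a := by
  unfold psi
  rw [Nat.lor_comm _ (2^c), Nat.lor_comm (2^a) (2^b), ← Nat.lor_assoc]

lemma P4both : ∀ d < 12, ∀ c < d, ∀ b < c, ∀ a < b,
    ((psi a b c && psi a b d && psi a c d && psi b c d) = false ∧
     (psi a b c || psi a b d || psi a c d || psi b c d) = true) := by decide

lemma dlt_eq_of {x z k : ℕ} (h1 : x.testBit k ≠ z.testBit k)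
    (h2 : ∀ j, k < j → x.testBit j = z.testBit j) : dlt x z = k := by
  have hbit : (x ^^^ z).testBit k = true := by
    rw [Nat.testBit_xor]
    revert h1; cases x.testBit k <;> cases z.testBit k <;> simp
  have hge : 2 ^ k ≤ x ^^^ z := Nat.ge_two_pow_of_testBit hbit
  have hlt : x ^^^ z < 2 ^ (k+1) := by
    apply Nat.lt_pow_two_of_testBit
    intro i hi
    rw [Nat.testBit_xor, h2 i (by omega)]
    simp
  have h1' : (x ^^^ z).size ≤ k+1 := Nat.size_le.2 hlt
  have h2' : k < (x ^^^ z).size := Nat.lt_size.2 hge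
  unfold dlt
  omega

lemma dlt_spec {x y : ℕ} (h : x ≠ y) :
    x.testBit (dlt x y) ≠ y.testBit (dlt x y) ∧
      ∀ j, dlt x y < j → x.testBit j = y.testBit j := by
  have hxz : x ^^^ y ≠ 0 := by
    intro hh
    exact h (by simpa [Nat.xor_assoc] using congrArg (· ^^^ y) hh)
  have hsz : 0 < (x ^^^ y).size := Nat.size_pos.2 (Nat.pos_of_ne_zero hxz)
  have hk : dlt x y = (x ^^^ y).size - 1 := rfl
  have hge : 2 ^ ((x ^^^ y).size - 1) ≤ x ^^^ y := Nat.lt_size.1 (by omega)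
  have hlt : x ^^^ y < 2 ^ (x ^^^ y).size := Nat.lt_size_self _
  constructor
  · have hbit : (x ^^^ y).testBit (dlt x y) = true := by
      rw [Nat.testBit_eq_decide_div_mod_eq]
      have hp : 0 < 2 ^ ((x ^^^ y).size - 1) := Nat.pow_pos (by norm_num)
      have hd1 : 1 ≤ (x ^^^ y) / 2 ^ ((x ^^^ y).size - 1) :=
        (Nat.le_div_iff_mul_le hp).2 (by omega)
      have hd2 : (x ^^^ y) / 2 ^ ((x ^^^ y).size - 1) < 2 := by
        apply (Nat.div_lt_iff_lt_mul hp).2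
        calc x ^^^ y < 2 ^ (x ^^^ y).size := hlt
        _ = 2 ^ ((x ^^^ y).size - 1) * 2 := by
              rw [← Nat.pow_succ]
              congr 1
              omega
        _ = 2 * 2 ^ ((x ^^^ y).size - 1) := by ring
      rw [hk]
      have : (x ^^^ y) / 2 ^ ((x ^^^ y).size - 1) = 1 := by omega
      simp [this]
    rw [Nat.testBit_xor] at hbit
    intro heq
    rw [heq] at hbit
    simp at hbit
  · intro j hj
    have hfb : (x ^^^ y).testBit j = false := by
      apply Nat.testBit_lt_two_pow
      calc x ^^^ y < 2 ^ (x ^^^ y).size := hlt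
      _ ≤ 2 ^ j := Nat.pow_le_pow_right (by norm_num) (by omega)
    rw [Nat.testBit_xor] at hfb
    revert hfb
    cases x.testBit j <;> cases y.testBit j <;> simp

lemma dlt_bits {x y : ℕ} (h : x < y) :
    x.testBit (dlt x y) = false ∧ y.testBit (dlt x y) = true := by
  obtain ⟨hne, habove⟩ := dlt_spec (Nat.ne_of_lt h)
  cases hx : x.testBit (dlt x y) <;> cases hy : y.testBit (dlt x y)
  · rw [hx, hy] at hne; simp at hne
  · exact ⟨rfl, rfl⟩
  · have : y < x := Nat.lt_of_testBit (dlt x y) hy hx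
      (fun j hj => (habove j hj).symm)
    omega
  · rw [hx, hy] at hne; simp at hne

lemma dlt_ne {x y z : ℕ} (h1 : x < y) (h2 : y < z) : dlt x y ≠ dlt y z := by
  intro he
  have a := (dlt_bits h1).2
  have b := (dlt_bits h2).1
  rw [he] at a
  rw [a] at b
  simp at b

lemma dlt_max {x y z : ℕ} (h1 : x < y) (h2 : y < z) :
    dlt x z = max (dlt x y) (dlt y z) := by
  have hne := dlt_ne h1 h2
  obtain ⟨hx1, hy1⟩ := dlt_bits h1
  obtain ⟨hy2, hz2⟩ := dlt_bits h2
  obtain ⟨_, hab1⟩ := dlt_spec (Nat.ne_of_lt h1)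
  obtain ⟨_, hab2⟩ := dlt_spec (Nat.ne_of_lt h2)
  rcases lt_or_gt_of_ne hne with hab | hab
  · rw [max_eq_right hab.le]
    apply dlt_eq_of
    · rw [hab1 _ hab, hy2, hz2]
      simp
    · intro j hj
      rw [hab1 _ (hab.trans hj), hab2 _ hj]
  · rw [max_eq_left hab.le]
    apply dlt_eq_of
    · rw [← hab2 _ hab, hx1, hy1]
      simp
    · intro j hj
      rw [hab1 _ hj, hab2 _ (hab.trans hj)]

abbrev V := Fin 3960

def dl (a b : V) : ℕ := dlt a.val b.val

lemma dl_lt_12 (a b : V) : dl a b < 12 := by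
  have hx : (a.val ^^^ b.val) < 2 ^ 12 := by
    apply Nat.lt_pow_two_of_testBit
    intro i hi
    have ha : a.val < 2 ^ i :=
      lt_of_lt_of_le (lt_trans a.isLt (by norm_num))
        (Nat.pow_le_pow_right (by norm_num) hi)
    have hb : b.val < 2 ^ i :=
      lt_of_lt_of_le (lt_trans b.isLt (by norm_num))
        (Nat.pow_le_pow_right (by norm_num) hi)
    rw [Nat.testBit_xor, Nat.testBit_lt_two_pow ha, Nat.testBit_lt_two_pow hb]
    rfl
  have := Nat.size_le.2 hx
  unfold dl dlt
  omega

def chi3 (a b c d : V) : Bool :=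
  if (dl a b < dl b c ∧ dl b c < dl c d) ∨ (dl c d < dl b c ∧ dl b c < dl a b)
  then psi (dl a b) (dl b c) (dl c d)
  else decide (dl a b < dl b c)

def ofList : List V → Bool
  | [a, b, c, d] => chi3 a b c d
  | _ => false

def chi (E : Finset V) : Bool := ofList (E.sort (· ≤ ·))

lemma sort4 {a b c d : V} (h1 : a < b) (h2 : b < c) (h3 : c < d) :
    ({a, b, c, d} : Finset V).sort (· ≤ ·) = [a, b, c, d] := by
  have hcd : ({c, d} : Finset V).sort (· ≤ ·) = [c, d] := by
    rw [Finset.sort_insert _ (by simp [h3.le]) (by simp [h3.ne]), Finset.sort_singleton]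
  have hbcd : ({b, c, d} : Finset V).sort (· ≤ ·) = [b, c, d] := by
    rw [Finset.sort_insert _ ?_ ?_, hcd]
    · intro x hx
      simp only [Finset.mem_insert, Finset.mem_singleton] at hx
      rcases hx with rfl | rfl
      exacts [h2.le, (h2.trans h3).le]
    · simp only [Finset.mem_insert, Finset.mem_singleton]
      push_neg
      exact ⟨h2.ne, (h2.trans h3).ne⟩
  rw [Finset.sort_insert _ ?_ ?_, hbcd]
  · intro x hx
    simp only [Finset.mem_insert, Finset.mem_singleton] at hx
    rcases hx with rfl | rfl | rfl
    exacts [h1.le, (h1.trans h2).le, (h1.trans (h2.trans h3)).le]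
  · simp only [Finset.mem_insert, Finset.mem_singleton]
    push_neg
    exact ⟨h1.ne, (h1.trans h2).ne, (h1.trans (h2.trans h3)).ne⟩

lemma chi_quad {a b c d : V} (h1 : a < b) (h2 : b < c) (h3 : c < d) :
    chi {a, b, c, d} = chi3 a b c d := by
  show ofList _ = _
  rw [sort4 h1 h2 h3]
  rfl

lemma card4 {a b c d : V} (h1 : a < b) (h2 : b < c) (h3 : c < d) :
    ({a, b, c, d} : Finset V).card = 4 := by
  have hna : a ∉ ({b, c, d} : Finset V) := by
    simp only [Finset.mem_insert, Finset.mem_singleton]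
    push_neg
    exact ⟨h1.ne, (h1.trans h2).ne, (h1.trans (h2.trans h3)).ne⟩
  have hnb : b ∉ ({c, d} : Finset V) := by
    simp only [Finset.mem_insert, Finset.mem_singleton]
    push_neg
    exact ⟨h2.ne, (h2.trans h3).ne⟩
  have hnc : c ∉ ({d} : Finset V) := by simp [h3.ne]
  rw [Finset.card_insert_of_notMem hna, Finset.card_insert_of_notMem hnb,
    Finset.card_insert_of_notMem hnc, Finset.card_singleton]

lemma chi3_mono_inc {a b c d : V} (h1 : dl a b < dl b c) (h2 : dl b c < dl c d) :
    chi3 a b c d = psi (dl a b) (dl b c) (dl c d) := by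
  unfold chi3
  rw [if_pos (Or.inl ⟨h1, h2⟩)]

lemma chi3_mono_dec {a b c d : V} (h1 : dl b c < dl a b) (h2 : dl c d < dl b c) :
    chi3 a b c d = psi (dl a b) (dl b c) (dl c d) := by
  unfold chi3
  rw [if_pos (Or.inr ⟨h2, h1⟩)]

lemma chi3_max {a b c d : V} (h1 : dl a b < dl b c) (h2 : dl c d < dl b c) :
    chi3 a b c d = true := by
  unfold chi3
  rw [if_neg (by rintro (⟨_, h⟩ | ⟨_, h⟩) <;> omega)]
  simp [h1]

lemma chi3_min {a b c d : V} (h1 : dl b c < dl a b) (h2 : dl b c < dl c d) :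
    chi3 a b c d = false := by
  unfold chi3
  rw [if_neg (by rintro (⟨h, _⟩ | ⟨_, h⟩) <;> omega)]
  simp
  omega

lemma peak {b0 b1 b2 b3 : V} (h01 : b0 < b1) (h12 : b1 < b2) (h23 : b2 < b3)
    (hA : dl b0 b1 < dl b1 b2) (hB : dl b2 b3 < dl b1 b2) :
    chi {b0, b1, b2, b3} = true := by
  rw [chi_quad h01 h12 h23]
  exact chi3_max hA hB

lemma valley {b0 b1 b2 b3 : V} (h01 : b0 < b1) (h12 : b1 < b2) (h23 : b2 < b3)
    (hA : dl b1 b2 < dl b0 b1) (hB : dl b1 b2 < dl b2 b3) :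
    chi {b0, b1, b2, b3} = false := by
  rw [chi_quad h01 h12 h23]
  exact chi3_min hA hB

lemma run_inc {b0 b1 b2 b3 b4 : V} (h01 : b0 < b1) (h12 : b1 < b2) (h23 : b2 < b3)
    (h34 : b3 < b4)
    (hA : dl b0 b1 < dl b1 b2) (hB : dl b1 b2 < dl b2 b3) (hC : dl b2 b3 < dl b3 b4) :
    (∃ e ⊆ ({b0, b1, b2, b3, b4} : Finset V), e.card = 4 ∧ chi e = false) ∧
    (∃ e ⊆ ({b0, b1, b2, b3, b4} : Finset V), e.card = 4 ∧ chi e = true) := by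
  have hd24 : dl b2 b4 = dl b3 b4 := by
    show dlt _ _ = _
    rw [dlt_max (show (b2:ℕ) < b3 from h23) (show (b3:ℕ) < b4 from h34)]
    exact max_eq_right hC.le
  have hd13 : dl b1 b3 = dl b2 b3 := by
    show dlt _ _ = _
    rw [dlt_max (show (b1:ℕ) < b2 from h12) (show (b2:ℕ) < b3 from h23)]
    exact max_eq_right hB.le
  have c1 : chi {b0, b1, b2, b3} = psi (dl b0 b1) (dl b1 b2) (dl b2 b3) := by
    rw [chi_quad h01 h12 h23]
    exact chi3_mono_inc hA hB
  have c2 : chi {b0, b1, b2, b4} = psi (dl b0 b1) (dl b1 b2) (dl b3 b4) := by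
    rw [chi_quad h01 h12 (h23.trans h34)]
    rw [chi3_mono_inc hA (by rw [hd24]; exact hB.trans hC), hd24]
  have c3 : chi {b0, b1, b3, b4} = psi (dl b0 b1) (dl b2 b3) (dl b3 b4) := by
    rw [chi_quad h01 (h12.trans h23) h34]
    rw [chi3_mono_inc (by rw [hd13]; exact hA.trans hB) (by rw [hd13]; exact hC), hd13]
  have c4 : chi {b1, b2, b3, b4} = psi (dl b1 b2) (dl b2 b3) (dl b3 b4) := by
    rw [chi_quad h12 h23 h34]
    exact chi3_mono_inc hB hC
  have hP := P4both (dl b3 b4) (dl_lt_12 b3 b4) (dl b2 b3) hC (dl b1 b2) hB (dl b0 b1) hA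
  constructor
  · by_cases e1 : psi (dl b0 b1) (dl b1 b2) (dl b2 b3) = false
    · exact ⟨{b0, b1, b2, b3}, by simp [Finset.insert_subset_iff],
        card4 h01 h12 h23, c1.trans e1⟩
    by_cases e2 : psi (dl b0 b1) (dl b1 b2) (dl b3 b4) = false
    · exact ⟨{b0, b1, b2, b4}, by simp [Finset.insert_subset_iff],
        card4 h01 h12 (h23.trans h34), c2.trans e2⟩
    by_cases e3 : psi (dl b0 b1) (dl b2 b3) (dl b3 b4) = false
    · exact ⟨{b0, b1, b3, b4}, by simp [Finset.insert_subset_iff],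
        card4 h01 (h12.trans h23) h34, c3.trans e3⟩
    by_cases e4 : psi (dl b1 b2) (dl b2 b3) (dl b3 b4) = false
    · exact ⟨{b1, b2, b3, b4}, by simp [Finset.insert_subset_iff],
        card4 h12 h23 h34, c4.trans e4⟩
    · exfalso
      rw [Bool.not_eq_false] at e1 e2 e3 e4
      rw [e1, e2, e3, e4] at hP
      simp at hP
  · by_cases e1 : psi (dl b0 b1) (dl b1 b2) (dl b2 b3) = true
    · exact ⟨{b0, b1, b2, b3}, by simp [Finset.insert_subset_iff],
        card4 h01 h12 h23, c1.trans e1⟩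
    by_cases e2 : psi (dl b0 b1) (dl b1 b2) (dl b3 b4) = true
    · exact ⟨{b0, b1, b2, b4}, by simp [Finset.insert_subset_iff],
        card4 h01 h12 (h23.trans h34), c2.trans e2⟩
    by_cases e3 : psi (dl b0 b1) (dl b2 b3) (dl b3 b4) = true
    · exact ⟨{b0, b1, b3, b4}, by simp [Finset.insert_subset_iff],
        card4 h01 (h12.trans h23) h34, c3.trans e3⟩
    by_cases e4 : psi (dl b1 b2) (dl b2 b3) (dl b3 b4) = true
    · exact ⟨{b1, b2, b3, b4}, by simp [Finset.insert_subset_iff],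
        card4 h12 h23 h34, c4.trans e4⟩
    · exfalso
      rw [Bool.not_eq_true] at e1 e2 e3 e4
      rw [e1, e2, e3, e4] at hP
      simp at hP

lemma run_dec {b0 b1 b2 b3 b4 : V} (h01 : b0 < b1) (h12 : b1 < b2) (h23 : b2 < b3)
    (h34 : b3 < b4)
    (hA : dl b1 b2 < dl b0 b1) (hB : dl b2 b3 < dl b1 b2) (hC : dl b3 b4 < dl b2 b3) :
    (∃ e ⊆ ({b0, b1, b2, b3, b4} : Finset V), e.card = 4 ∧ chi e = false) ∧
    (∃ e ⊆ ({b0, b1, b2, b3, b4} : Finset V), e.card = 4 ∧ chi e = true) := by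
  have hd13 : dl b1 b3 = dl b1 b2 := by
    show dlt _ _ = _
    rw [dlt_max (show (b1:ℕ) < b2 from h12) (show (b2:ℕ) < b3 from h23)]
    exact max_eq_left hB.le
  have hd02 : dl b0 b2 = dl b0 b1 := by
    show dlt _ _ = _
    rw [dlt_max (show (b0:ℕ) < b1 from h01) (show (b1:ℕ) < b2 from h12)]
    exact max_eq_left hA.le
  have c1 : chi {b0, b1, b2, b3} = psi (dl b2 b3) (dl b1 b2) (dl b0 b1) := by
    rw [chi_quad h01 h12 h23, chi3_mono_dec hA hB, psi_rev]
  have c2 : chi {b0, b1, b3, b4} = psi (dl b3 b4) (dl b1 b2) (dl b0 b1) := by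
    rw [chi_quad h01 (h12.trans h23) h34]
    rw [chi3_mono_dec (by rw [hd13]; exact hA) (by rw [hd13]; exact hC.trans hB), hd13,
      psi_rev]
  have c3 : chi {b0, b2, b3, b4} = psi (dl b3 b4) (dl b2 b3) (dl b0 b1) := by
    rw [chi_quad (h01.trans h12) h23 h34]
    rw [chi3_mono_dec (by rw [hd02]; exact hB.trans hA) hC, hd02, psi_rev]
  have c4 : chi {b1, b2, b3, b4} = psi (dl b3 b4) (dl b2 b3) (dl b1 b2) := by
    rw [chi_quad h12 h23 h34, chi3_mono_dec hB hC, psi_rev]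
  have hP := P4both (dl b0 b1) (dl_lt_12 b0 b1) (dl b1 b2) hA (dl b2 b3) hB (dl b3 b4) hC
  constructor
  · by_cases e4 : psi (dl b3 b4) (dl b2 b3) (dl b1 b2) = false
    · exact ⟨{b1, b2, b3, b4}, by simp [Finset.insert_subset_iff],
        card4 h12 h23 h34, c4.trans e4⟩
    by_cases e3 : psi (dl b3 b4) (dl b2 b3) (dl b0 b1) = false
    · exact ⟨{b0, b2, b3, b4}, by simp [Finset.insert_subset_iff],
        card4 (h01.trans h12) h23 h34, c3.trans e3⟩
    by_cases e2 : psi (dl b3 b4) (dl b1 b2) (dl b0 b1) = false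
    · exact ⟨{b0, b1, b3, b4}, by simp [Finset.insert_subset_iff],
        card4 h01 (h12.trans h23) h34, c2.trans e2⟩
    by_cases e1 : psi (dl b2 b3) (dl b1 b2) (dl b0 b1) = false
    · exact ⟨{b0, b1, b2, b3}, by simp [Finset.insert_subset_iff],
        card4 h01 h12 h23, c1.trans e1⟩
    · exfalso
      rw [Bool.not_eq_false] at e1 e2 e3 e4
      rw [e1, e2, e3, e4] at hP
      simp at hP
  · by_cases e4 : psi (dl b3 b4) (dl b2 b3) (dl b1 b2) = true
    · exact ⟨{b1, b2, b3, b4}, by simp [Finset.insert_subset_iff],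
        card4 h12 h23 h34, c4.trans e4⟩
    by_cases e3 : psi (dl b3 b4) (dl b2 b3) (dl b0 b1) = true
    · exact ⟨{b0, b2, b3, b4}, by simp [Finset.insert_subset_iff],
        card4 (h01.trans h12) h23 h34, c3.trans e3⟩
    by_cases e2 : psi (dl b3 b4) (dl b1 b2) (dl b0 b1) = true
    · exact ⟨{b0, b1, b3, b4}, by simp [Finset.insert_subset_iff],
        card4 h01 (h12.trans h23) h34, c2.trans e2⟩
    by_cases e1 : psi (dl b2 b3) (dl b1 b2) (dl b0 b1) = true
    · exact ⟨{b0, b1, b2, b3}, by simp [Finset.insert_subset_iff],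
        card4 h01 h12 h23, c1.trans e1⟩
    · exfalso
      rw [Bool.not_eq_true] at e1 e2 e3 e4
      rw [e1, e2, e3, e4] at hP
      simp at hP

end Stmt18

open Stmt18

theorem stmt_18 :
    ∃ χ : Finset (Fin 3960) → Bool,
      ∀ S : Finset (Fin 3960), S.card = 7 →
        (∃ e ⊆ S, e.card = 4 ∧ χ e = false) ∧ (∃ e' ⊆ S, e'.card = 4 ∧ χ e' = true) := by
  refine ⟨chi, fun S hS => ?_⟩
  have hlen : (S.sort (· ≤ ·)).length = 7 := by rw [Finset.length_sort, hS]
  have hsort : (S.sort (· ≤ ·)).Pairwise (· < ·) := S.sortedLT_sort.pairwise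
  have hmem : ∀ x ∈ S.sort (· ≤ ·), x ∈ S := fun x hx => (Finset.mem_sort _).1 hx
  obtain ⟨a0, a1, a2, a3, a4, a5, a6, hl⟩ :
      ∃ a0 a1 a2 a3 a4 a5 a6, S.sort (· ≤ ·) = [a0, a1, a2, a3, a4, a5, a6] := by
    rcases hll : S.sort (· ≤ ·) with
      _ | ⟨a0, _ | ⟨a1, _ | ⟨a2, _ | ⟨a3, _ | ⟨a4, _ | ⟨a5, _ | ⟨a6, _ | ⟨a7, tl⟩⟩⟩⟩⟩⟩⟩⟩ <;>
      rw [hll] at hlen <;> simp only [List.length] at hlen <;>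
      first
        | omega
        | exact ⟨a0, a1, a2, a3, a4, a5, a6, rfl⟩
  rw [hl] at hsort hmem
  simp only [List.pairwise_cons, List.mem_cons, List.not_mem_nil, List.Pairwise.nil,
    forall_eq_or_imp, forall_eq, or_false, and_true] at hsort
  obtain ⟨⟨h01, h02, h03, h04, h05, h06⟩, ⟨h12, h13, h14, h15, h16⟩,
    ⟨h23, h24, h25, h26⟩, ⟨h34, h35, h36⟩, ⟨h45, h46⟩, h56, -⟩ := hsort
  have m0 : a0 ∈ S := hmem _ (by simp)
  have m1 : a1 ∈ S := hmem _ (by simp)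
  have m2 : a2 ∈ S := hmem _ (by simp)
  have m3 : a3 ∈ S := hmem _ (by simp)
  have m4 : a4 ∈ S := hmem _ (by simp)
  have m5 : a5 ∈ S := hmem _ (by simp)
  have m6 : a6 ∈ S := hmem _ (by simp)
  have hne01 : dl a0 a1 ≠ dl a1 a2 := dlt_ne (show (a0:ℕ) < a1 from h01) (show (a1:ℕ) < a2 from h12)
  have hne12 : dl a1 a2 ≠ dl a2 a3 := dlt_ne (show (a1:ℕ) < a2 from h12) (show (a2:ℕ) < a3 from h23)
  have hne23 : dl a2 a3 ≠ dl a3 a4 := dlt_ne (show (a2:ℕ) < a3 from h23) (show (a3:ℕ) < a4 from h34)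
  have hne34 : dl a3 a4 ≠ dl a4 a5 := dlt_ne (show (a3:ℕ) < a4 from h34) (show (a4:ℕ) < a5 from h45)
  have hne45 : dl a4 a5 ≠ dl a5 a6 := dlt_ne (show (a4:ℕ) < a5 from h45) (show (a5:ℕ) < a6 from h56)
  have sub01234 : ({a0, a1, a2, a3, a4} : Finset V) ⊆ S := by
    simp [Finset.insert_subset_iff, m0, m1, m2, m3, m4]
  have sub12345 : ({a1, a2, a3, a4, a5} : Finset V) ⊆ S := by
    simp [Finset.insert_subset_iff, m1, m2, m3, m4, m5]
  have sub23456 : ({a2, a3, a4, a5, a6} : Finset V) ⊆ S := by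
    simp [Finset.insert_subset_iff, m2, m3, m4, m5, m6]
  constructor
  · -- a false 4-subset
    have key : (dl a1 a2 < dl a0 a1 ∧ dl a1 a2 < dl a2 a3) ∨ (dl a2 a3 < dl a1 a2 ∧ dl a2 a3 < dl a3 a4) ∨ (dl a3 a4 < dl a2 a3 ∧ dl a3 a4 < dl a4 a5) ∨
        (dl a4 a5 < dl a3 a4 ∧ dl a4 a5 < dl a5 a6) ∨
        (dl a0 a1 < dl a1 a2 ∧ dl a1 a2 < dl a2 a3 ∧ dl a2 a3 < dl a3 a4) ∨ (dl a1 a2 < dl a2 a3 ∧ dl a2 a3 < dl a3 a4 ∧ dl a3 a4 < dl a4 a5) ∨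
        (dl a2 a3 < dl a3 a4 ∧ dl a3 a4 < dl a4 a5 ∧ dl a4 a5 < dl a5 a6) ∨
        (dl a1 a2 < dl a0 a1 ∧ dl a2 a3 < dl a1 a2 ∧ dl a3 a4 < dl a2 a3) ∨ (dl a2 a3 < dl a1 a2 ∧ dl a3 a4 < dl a2 a3 ∧ dl a4 a5 < dl a3 a4) ∨
        (dl a3 a4 < dl a2 a3 ∧ dl a4 a5 < dl a3 a4 ∧ dl a5 a6 < dl a4 a5) := by
      rcases hne01.lt_or_gt with c0 | c0 <;> rcases hne12.lt_or_gt with c1 | c1 <;>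
        rcases hne23.lt_or_gt with c2 | c2 <;> rcases hne34.lt_or_gt with c3 | c3 <;>
        rcases hne45.lt_or_gt with c4 | c4 <;> omega
    rcases key with ⟨hA, hB⟩ | ⟨hA, hB⟩ | ⟨hA, hB⟩ | ⟨hA, hB⟩ |
      ⟨hA, hB, hC⟩ | ⟨hA, hB, hC⟩ | ⟨hA, hB, hC⟩ | ⟨hA, hB, hC⟩ | ⟨hA, hB, hC⟩ | ⟨hA, hB, hC⟩
    · exact ⟨{a0, a1, a2, a3}, by simp [Finset.insert_subset_iff, m0, m1, m2, m3],
        card4 h01 h12 h23, valley h01 h12 h23 hA hB⟩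
    · exact ⟨{a1, a2, a3, a4}, by simp [Finset.insert_subset_iff, m1, m2, m3, m4],
        card4 h12 h23 h34, valley h12 h23 h34 hA hB⟩
    · exact ⟨{a2, a3, a4, a5}, by simp [Finset.insert_subset_iff, m2, m3, m4, m5],
        card4 h23 h34 h45, valley h23 h34 h45 hA hB⟩
    · exact ⟨{a3, a4, a5, a6}, by simp [Finset.insert_subset_iff, m3, m4, m5, m6],
        card4 h34 h45 h56, valley h34 h45 h56 hA hB⟩
    · obtain ⟨e, he, hc, hv⟩ := (run_inc h01 h12 h23 h34 hA hB hC).1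
      exact ⟨e, he.trans sub01234, hc, hv⟩
    · obtain ⟨e, he, hc, hv⟩ := (run_inc h12 h23 h34 h45 hA hB hC).1
      exact ⟨e, he.trans sub12345, hc, hv⟩
    · obtain ⟨e, he, hc, hv⟩ := (run_inc h23 h34 h45 h56 hA hB hC).1
      exact ⟨e, he.trans sub23456, hc, hv⟩
    · obtain ⟨e, he, hc, hv⟩ := (run_dec h01 h12 h23 h34 hA hB hC).1
      exact ⟨e, he.trans sub01234, hc, hv⟩
    · obtain ⟨e, he, hc, hv⟩ := (run_dec h12 h23 h34 h45 hA hB hC).1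
      exact ⟨e, he.trans sub12345, hc, hv⟩
    · obtain ⟨e, he, hc, hv⟩ := (run_dec h23 h34 h45 h56 hA hB hC).1
      exact ⟨e, he.trans sub23456, hc, hv⟩
  · -- a true 4-subset
    have key : (dl a0 a1 < dl a1 a2 ∧ dl a2 a3 < dl a1 a2) ∨ (dl a1 a2 < dl a2 a3 ∧ dl a3 a4 < dl a2 a3) ∨ (dl a2 a3 < dl a3 a4 ∧ dl a4 a5 < dl a3 a4) ∨
        (dl a3 a4 < dl a4 a5 ∧ dl a5 a6 < dl a4 a5) ∨
        (dl a0 a1 < dl a1 a2 ∧ dl a1 a2 < dl a2 a3 ∧ dl a2 a3 < dl a3 a4) ∨ (dl a1 a2 < dl a2 a3 ∧ dl a2 a3 < dl a3 a4 ∧ dl a3 a4 < dl a4 a5) ∨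
        (dl a2 a3 < dl a3 a4 ∧ dl a3 a4 < dl a4 a5 ∧ dl a4 a5 < dl a5 a6) ∨
        (dl a1 a2 < dl a0 a1 ∧ dl a2 a3 < dl a1 a2 ∧ dl a3 a4 < dl a2 a3) ∨ (dl a2 a3 < dl a1 a2 ∧ dl a3 a4 < dl a2 a3 ∧ dl a4 a5 < dl a3 a4) ∨
        (dl a3 a4 < dl a2 a3 ∧ dl a4 a5 < dl a3 a4 ∧ dl a5 a6 < dl a4 a5) := by
      rcases hne01.lt_or_gt with c0 | c0 <;> rcases hne12.lt_or_gt with c1 | c1 <;>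
        rcases hne23.lt_or_gt with c2 | c2 <;> rcases hne34.lt_or_gt with c3 | c3 <;>
        rcases hne45.lt_or_gt with c4 | c4 <;> omega
    rcases key with ⟨hA, hB⟩ | ⟨hA, hB⟩ | ⟨hA, hB⟩ | ⟨hA, hB⟩ |
      ⟨hA, hB, hC⟩ | ⟨hA, hB, hC⟩ | ⟨hA, hB, hC⟩ | ⟨hA, hB, hC⟩ | ⟨hA, hB, hC⟩ | ⟨hA, hB, hC⟩
    · exact ⟨{a0, a1, a2, a3}, by simp [Finset.insert_subset_iff, m0, m1, m2, m3],
        card4 h01 h12 h23, peak h01 h12 h23 hA hB⟩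
    · exact ⟨{a1, a2, a3, a4}, by simp [Finset.insert_subset_iff, m1, m2, m3, m4],
        card4 h12 h23 h34, peak h12 h23 h34 hA hB⟩
    · exact ⟨{a2, a3, a4, a5}, by simp [Finset.insert_subset_iff, m2, m3, m4, m5],
        card4 h23 h34 h45, peak h23 h34 h45 hA hB⟩
    · exact ⟨{a3, a4, a5, a6}, by simp [Finset.insert_subset_iff, m3, m4, m5, m6],
        card4 h34 h45 h56, peak h34 h45 h56 hA hB⟩
    · obtain ⟨e, he, hc, hv⟩ := (run_inc h01 h12 h23 h34 hA hB hC).2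
      exact ⟨e, he.trans sub01234, hc, hv⟩
    · obtain ⟨e, he, hc, hv⟩ := (run_inc h12 h23 h34 h45 hA hB hC).2
      exact ⟨e, he.trans sub12345, hc, hv⟩
    · obtain ⟨e, he, hc, hv⟩ := (run_inc h23 h34 h45 h56 hA hB hC).2
      exact ⟨e, he.trans sub23456, hc, hv⟩
    · obtain ⟨e, he, hc, hv⟩ := (run_dec h01 h12 h23 h34 hA hB hC).2
      exact ⟨e, he.trans sub01234, hc, hv⟩
    · obtain ⟨e, he, hc, hv⟩ := (run_dec h12 h23 h34 h45 hA hB hC).2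
      exact ⟨e, he.trans sub12345, hc, hv⟩
    · obtain ⟨e, he, hc, hv⟩ := (run_dec h23 h34 h45 h56 hA hB hC).2
      exact ⟨e, he.trans sub23456, hc, hv⟩
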